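/- Let H be d-dimensional with basis e₁,…,e_d, and define the transpose antiautomorphism t on Λ•H by t(v₁∧…∧v_k) = v_k∧…∧v₁ = (-1)^{k(k-1)/2} v₁∧…∧v_k, and the pairing (φ,ψ) = (t(φ) ∧ ψ)_top (coefficient of e₁∧…∧e_d). Then for any x ∈ H ⊕ H* acting on Λ•H via Clifford multiplication (exterior plus interior product), (x·φ, x·ψ) = Q(x)(φ,ψ), where Q(v,w) = w(v). -/

import Mathlib

open ExteriorAlgebra

section Aux

variable {H : Type*} [AddCommGroup H] [Module ℂ H] [FiniteDimensional ℂ H]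

local notation "Q0" => (0 : QuadraticForm ℂ H)

/-- Contraction of a degree-zero element is zero. -/
lemma aux_contract_zero (w : Module.Dual ℂ H) (z : ExteriorAlgebra ℂ H)
    (hz : z ∈ ⋀[ℂ]^0 H) : CliffordAlgebra.contractLeft (Q := Q0) w z = 0 := by
  have hz' : z ∈ (LinearMap.range (ι ℂ : H →ₗ[ℂ] ExteriorAlgebra ℂ H)) ^ 0 := hz
  rw [pow_zero, Submodule.mem_one] at hz'
  obtain ⟨r, rfl⟩ := hz'
  exact CliffordAlgebra.contractLeft_algebraMap Q0 w r

/-- Contraction lowers degree by one. -/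
lemma aux_contract_mem (w : Module.Dual ℂ H) :
    ∀ (n : ℕ) (z : ExteriorAlgebra ℂ H), z ∈ ⋀[ℂ]^(n + 1) H →
      CliffordAlgebra.contractLeft (Q := Q0) w z ∈ ⋀[ℂ]^n H := by
  intro n
  induction n with
  | zero =>
    intro z hz
    have hz' : z ∈ (LinearMap.range (ι ℂ : H →ₗ[ℂ] ExteriorAlgebra ℂ H)) ^ (0 + 1) := hz
    rw [pow_succ] at hz'
    refine Submodule.mul_induction_on hz' (fun a ha b hb => ?_) (fun x y hx hy => ?_)
    · rw [pow_zero, Submodule.mem_one] at ha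
      obtain ⟨r, rfl⟩ := ha
      obtain ⟨m, rfl⟩ := hb
      rw [Algebra.algebraMap_eq_smul_one, smul_mul_assoc, one_mul, map_smul,
        CliffordAlgebra.contractLeft_ι]
      refine Submodule.smul_mem _ _ ?_
      have : (algebraMap ℂ (ExteriorAlgebra ℂ H)) (w m) ∈
          (LinearMap.range (ι ℂ : H →ₗ[ℂ] ExteriorAlgebra ℂ H)) ^ 0 := by
        rw [pow_zero, Submodule.mem_one]; exact ⟨w m, rfl⟩
      exact this
    · rw [map_add]; exact Submodule.add_mem _ hx hy
  | succ n ih =>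
    intro z hz
    have hz' : z ∈ (LinearMap.range (ι ℂ : H →ₗ[ℂ] ExteriorAlgebra ℂ H)) ^ (n + 1 + 1) := hz
    rw [pow_succ'] at hz'
    refine Submodule.mul_induction_on hz' (fun a ha b hb => ?_) (fun x y hx hy => ?_)
    · obtain ⟨m, rfl⟩ := ha
      rw [CliffordAlgebra.contractLeft_ι_mul]
      refine Submodule.sub_mem _ (Submodule.smul_mem _ _ hb) ?_
      have : (⋀[ℂ]^(n + 1) H : Submodule ℂ (ExteriorAlgebra ℂ H))
          = (LinearMap.range (ι ℂ : H →ₗ[ℂ] ExteriorAlgebra ℂ H))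
            * (LinearMap.range (ι ℂ : H →ₗ[ℂ] ExteriorAlgebra ℂ H)) ^ n := pow_succ' _ _
      rw [this]
      exact Submodule.mul_mem_mul ⟨m, rfl⟩ (ih b hb)
    · rw [map_add]; exact Submodule.add_mem _ hx hy

/-- `ιMulti` of more than `finrank` vectors vanishes. -/
lemma aux_iMulti_zero (d : ℕ) (e : Module.Basis (Fin d) ℂ H) (v : Fin (d + 1) → H) :
    ιMulti ℂ (d + 1) v = 0 := by
  have hv : v = fun i => ∑ j, e.repr (v i) j • e j := by
    funext i
    exact (e.sum_repr (v i)).symm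
  have : ιMulti ℂ (d + 1) v
      = (ιMulti ℂ (d + 1) (M := H)).toMultilinearMap (fun i => ∑ j, e.repr (v i) j • e j) := by
    rw [← hv]; rfl
  rw [this, MultilinearMap.map_sum]
  refine Finset.sum_eq_zero fun r _ => ?_
  have h1 : (ιMulti ℂ (d + 1) (M := H)).toMultilinearMap (fun i => e.repr (v i) (r i) • e (r i))
      = (∏ i, e.repr (v i) (r i)) • (ιMulti ℂ (d + 1) (M := H)).toMultilinearMap
          (fun i => e (r i)) :=
    MultilinearMap.map_smul_univ _ _ _
  rw [h1]
  obtain ⟨i, j, hij, hr⟩ := Fintype.exists_ne_map_eq_of_card_lt r (by simp)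
  have h2 : (ιMulti ℂ (d + 1) (M := H)) (fun i => e (r i)) = 0 := by
    apply AlternatingMap.map_eq_zero_of_not_injective
    intro hinj
    exact hij (hinj (congrArg e hr))
  have h2' : (ιMulti ℂ (d + 1) (M := H)).toMultilinearMap (fun i => e (r i)) = 0 := h2
  rw [h2', smul_zero]

/-- τ kills any contraction. -/
lemma aux_tau_contract (d : ℕ) (e : Module.Basis (Fin d) ℂ H)
    (τ : ExteriorAlgebra ℂ H →ₗ[ℂ] ℂ)
    (hτ0 : ∀ k : ℕ, k ≠ d → ∀ z ∈ ⋀[ℂ]^k H, τ z = 0)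
    (w : Module.Dual ℂ H) (y : ExteriorAlgebra ℂ H) :
    τ (CliffordAlgebra.contractLeft (Q := Q0) w y) = 0 := by
  have hy : y ∈ (⊤ : Submodule ℂ (ExteriorAlgebra ℂ H)) := Submodule.mem_top
  rw [← ExteriorAlgebra.ιMulti_span (R := ℂ) (M := H)] at hy
  induction hy using Submodule.span_induction with
  | mem z hz =>
    obtain ⟨⟨n, u⟩, rfl⟩ := hz
    dsimp only
    have hmem : ιMulti ℂ n u ∈ ⋀[ℂ]^n H :=
      ExteriorAlgebra.ιMulti_range ℂ n (Set.mem_range_self u)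
    match n with
    | 0 => rw [aux_contract_zero w _ hmem, map_zero]
    | (m + 1) =>
      by_cases hm : m = d
      · subst hm
        rw [aux_iMulti_zero m e u, map_zero, map_zero]
      · exact hτ0 m hm _ (aux_contract_mem w m _ hmem)
  | zero => rw [map_zero, map_zero]
  | add x y _ _ hx hy => rw [map_add, map_add, hx, hy, add_zero]
  | smul c x _ hx => rw [map_smul, map_smul, hx, smul_zero]

/-- Adjointness: `τ((x⌊w)·y) = τ(x·(w⌋y))`. -/
lemma aux_adjoint (d : ℕ) (e : Module.Basis (Fin d) ℂ H)
    (τ : ExteriorAlgebra ℂ H →ₗ[ℂ] ℂ)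
    (hτ0 : ∀ k : ℕ, k ≠ d → ∀ z ∈ ⋀[ℂ]^k H, τ z = 0)
    (w : Module.Dual ℂ H) (x : ExteriorAlgebra ℂ H) :
    ∀ y : ExteriorAlgebra ℂ H,
      τ (CliffordAlgebra.contractRight (Q := Q0) x w * y)
        = τ (x * CliffordAlgebra.contractLeft (Q := Q0) w y) := by
  induction x using CliffordAlgebra.right_induction with
  | algebraMap r =>
    intro y
    rw [CliffordAlgebra.contractRight_algebraMap, zero_mul, map_zero,
      Algebra.algebraMap_eq_smul_one, smul_mul_assoc, one_mul, map_smul,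
      aux_tau_contract d e τ hτ0 w y, smul_zero]
  | add x₁ x₂ h₁ h₂ =>
    intro y
    rw [map_add, LinearMap.add_apply, add_mul, add_mul, map_add, map_add, h₁ y, h₂ y]
  | mul_ι m x ih =>
    intro y
    rw [CliffordAlgebra.contractRight_mul_ι, sub_mul, smul_mul_assoc, map_sub, map_smul,
      mul_assoc, ih (CliffordAlgebra.ι Q0 m * y), CliffordAlgebra.contractLeft_ι_mul,
      mul_sub, map_sub, mul_smul_comm, map_smul, mul_assoc]
    ring

end Aux

/-- With the transpose antiautomorphism `t` (reversal) on `Λ•H` and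
the pairing `(φ,ψ) = (t(φ) ∧ ψ)_top` (coefficient of `e₁∧…∧e_d`), for any
`x = (v,w) ∈ H ⊕ H*` acting by Clifford multiplication `x·φ = v∧φ + i_w φ`,
one has `(x·φ, x·ψ) = Q(x)(φ,ψ)` where `Q(v,w) = w(v)`. -/
theorem stmt9 (H : Type*) [AddCommGroup H] [Module ℂ H] [FiniteDimensional ℂ H]
    (d : ℕ) (hd : Module.finrank ℂ H = d) (e : Module.Basis (Fin d) ℂ H)
    (τ : ExteriorAlgebra ℂ H →ₗ[ℂ] ℂ)
    (hτ0 : ∀ k : ℕ, k ≠ d → ∀ z ∈ ⋀[ℂ]^k H, τ z = 0)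
    (hτtop : τ (ExteriorAlgebra.ιMulti ℂ d (fun i => e i)) = 1)
    (v : H) (w : Module.Dual ℂ H) (φ ψ : ExteriorAlgebra ℂ H) :
    τ (CliffordAlgebra.reverse (Q := (0 : QuadraticForm ℂ H))
          (ι ℂ v * φ + CliffordAlgebra.contractLeft (Q := (0 : QuadraticForm ℂ H)) w φ) *
        (ι ℂ v * ψ + CliffordAlgebra.contractLeft (Q := (0 : QuadraticForm ℂ H)) w ψ))
      = w v * τ (CliffordAlgebra.reverse (Q := (0 : QuadraticForm ℂ H)) φ * ψ) := by
  set Q0 : QuadraticForm ℂ H := 0 with hQ0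
  set X : ExteriorAlgebra ℂ H := CliffordAlgebra.reverse (Q := Q0) φ with hX
  have hrevc : CliffordAlgebra.reverse (Q := Q0)
      (CliffordAlgebra.contractLeft (Q := Q0) w φ)
      = CliffordAlgebra.contractRight (Q := Q0) X w := by
    rw [CliffordAlgebra.contractRight_eq, hX, CliffordAlgebra.reverse_reverse]
  have hrev : CliffordAlgebra.reverse (Q := Q0)
      (ι ℂ v * φ + CliffordAlgebra.contractLeft (Q := Q0) w φ)
      = X * CliffordAlgebra.ι Q0 v + CliffordAlgebra.contractRight (Q := Q0) X w := by
    rw [map_add, CliffordAlgebra.reverse.map_mul, CliffordAlgebra.reverse_ι, hrevc, hX]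
  rw [hrev]
  have hadj := aux_adjoint d e τ hτ0 w X
  have h1 : X * CliffordAlgebra.ι Q0 v * (ι ℂ v * ψ) = 0 := by
    rw [mul_assoc, ← mul_assoc (CliffordAlgebra.ι Q0 v)]
    have : CliffordAlgebra.ι Q0 v * ι ℂ v = 0 := ExteriorAlgebra.ι_sq_zero v
    rw [this, zero_mul, mul_zero]
  have h4 : τ (CliffordAlgebra.contractRight (Q := Q0) X w
      * CliffordAlgebra.contractLeft (Q := Q0) w ψ) = 0 := by
    rw [hadj, CliffordAlgebra.contractLeft_contractLeft, mul_zero, map_zero]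
  have h3 : τ (CliffordAlgebra.contractRight (Q := Q0) X w * (ι ℂ v * ψ))
      = w v * τ (X * ψ) - τ (X * (CliffordAlgebra.ι Q0 v
          * CliffordAlgebra.contractLeft (Q := Q0) w ψ)) := by
    rw [hadj (ι ℂ v * ψ)]
    have : CliffordAlgebra.contractLeft (Q := Q0) w (ι ℂ v * ψ)
        = w v • ψ - CliffordAlgebra.ι Q0 v * CliffordAlgebra.contractLeft (Q := Q0) w ψ :=
      CliffordAlgebra.contractLeft_ι_mul (Q := Q0) w v ψ
    rw [this, mul_sub, map_sub, mul_smul_comm, map_smul, smul_eq_mul]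
  rw [mul_add, add_mul, add_mul, map_add, map_add, map_add, h1, map_zero, zero_add, h3, h4,
    add_zero, mul_assoc]
  ring
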